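/- Any locally deterministic theory satisfies the coarse-grained version of Local Causality: conditioning on any further event beyond the thick-slice specification leaves the probability of any coarse-grained state of a shielded region unchanged. Precisely: suppose T is locally deterministic, sol ω ∈ T for every ω, R, R' ⊆ M are bounded, R' is shielded by R at time t, t' < t < R, g : M → S, C is the thick-slice specification event for (R, t', t, g), Q : (M → S) → Prop is a predicate depending only on values on R' (i.e., for all u, v : M → S, if u p = v p for all p ∈ R' then Q u ↔ Q v), A = {ω ∈ Ω : Q (sol ω)}, A and C are measurable, W is any measurable event, and μ(W ∩ C) > 0. Then μ[A | W ∩ C] = μ[A | C]. -/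

import Mathlib

open MeasureTheory ProbabilityTheory

noncomputable section

/-- Space: three-dimensional Euclidean space. -/
abbrev SpaceE : Type := EuclideanSpace ℝ (Fin 3)

/-- Spacetime: time × space. -/
abbrev SpacetimeM : Type := ℝ × SpaceE

/-- The cone slice Σ(R, t₀). -/
def coneSlice (R : Set SpacetimeM) (t₀ : ℝ) : Set SpaceE :=
  {x | ∃ p ∈ R, ‖x - p.2‖ ≤ |p.1 - t₀|}

/-- Local determinism of a theory `T`. -/
def LocallyDeterministic {S : Type*} (T : Set (SpacetimeM → S)) : Prop :=
  ∀ R : Set SpacetimeM, Bornology.IsBounded R →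
    ∀ t₀ : ℝ, ((∀ p ∈ R, t₀ < p.1) ∨ (∀ p ∈ R, p.1 < t₀)) →
      ∀ u ∈ T, ∀ v ∈ T,
        (∀ x ∈ coneSlice R t₀, u (t₀, x) = v (t₀, x)) →
        ∀ p ∈ R, u p = v p

/-- `R'` is shielded by `R` at time `t`: `t` lies below `R'`, and every point of
`R'` lies in the causal past of some point of `R`. -/
def ShieldedBy (R' R : Set SpacetimeM) (t : ℝ) : Prop :=
  (∀ p ∈ R', t < p.1) ∧ ∀ p ∈ R', ∃ q ∈ R, q.1 - p.1 ≥ ‖q.2 - p.2‖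

/-- The thick-slice specification event: the solution realised by `ω` agrees with
`g` on the thick slice C(Σ(R,t), Σ(R,t')) of the past light cone of `R`. -/
def thickSliceEvent {Ω : Type*} {S : Type*} (sol : Ω → SpacetimeM → S)
    (R : Set SpacetimeM) (t' t : ℝ) (g : SpacetimeM → S) : Set Ω :=
  {ω | ∀ s ∈ Set.Icc t' t, ∀ x ∈ coneSlice R s, sol ω (s, x) = g (s, x)}

/-- Coarse-grained half of Theorem 2: any locally deterministic theory satisfies
the coarse-grained version of Local Causality: conditioning on any further event
beyond the thick-slice specification leaves the probability of any coarse-grained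
state of a shielded region unchanged. -/
theorem locallyDeterministic_localCausality_coarseGrained
    {Ω : Type*} [MeasurableSpace Ω] (μ : Measure Ω) [IsProbabilityMeasure μ]
    {S : Type*} (T : Set (SpacetimeM → S)) (hT : LocallyDeterministic T)
    (sol : Ω → SpacetimeM → S) (hsol : ∀ ω, sol ω ∈ T)
    (R R' : Set SpacetimeM) (hR : Bornology.IsBounded R)
    (hR' : Bornology.IsBounded R')
    (t t' : ℝ) (hshield : ShieldedBy R' R t) (ht't : t' < t)
    (htR : ∀ p ∈ R, t < p.1)
    (g : SpacetimeM → S) (C : Set Ω) (hC : C = thickSliceEvent sol R t' t g)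
    (Q : (SpacetimeM → S) → Prop)
    (hQ : ∀ u v : SpacetimeM → S, (∀ p ∈ R', u p = v p) → (Q u ↔ Q v))
    (A : Set Ω) (hA : A = {ω | Q (sol ω)})
    (hAm : MeasurableSet A) (hCm : MeasurableSet C)
    (W : Set Ω) (hWm : MeasurableSet W)
    (hWCpos : 0 < μ (W ∩ C)) :
    μ[A | W ∩ C] = μ[A | C] := by
  -- On C, solutions agree on R'
  have hslice : coneSlice R' t ⊆ coneSlice R t := by
    rintro x ⟨p, hp, hx⟩
    obtain ⟨q, hq, hqp⟩ := hshield.2 p hp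
    refine ⟨q, hq, ?_⟩
    have htp := hshield.1 p hp
    have htq : t < q.1 := by
      have := norm_nonneg (q.2 - p.2); linarith
    rw [abs_of_pos (by linarith : (0:ℝ) < q.1 - t)]
    have h3 : ‖x - q.2‖ ≤ ‖x - p.2‖ + ‖p.2 - q.2‖ := by
      have := norm_add_le (x - p.2) (p.2 - q.2)
      simpa using this
    have h4 : ‖p.2 - q.2‖ = ‖q.2 - p.2‖ := norm_sub_rev _ _
    calc ‖x - q.2‖ ≤ |p.1 - t| + ‖q.2 - p.2‖ := by linarith
      _ ≤ (p.1 - t) + (q.1 - p.1) := by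
          rw [abs_of_pos (by linarith : (0:ℝ) < p.1 - t)]; linarith
      _ = q.1 - t := by ring
  have hagree : ∀ ω ∈ C, ∀ ω' ∈ C, ∀ p ∈ R', sol ω p = sol ω' p := by
    intro ω hω ω' hω' p hp
    refine hT R' hR' t (Or.inl hshield.1) (sol ω) (hsol ω) (sol ω') (hsol ω') ?_ p hp
    intro x hx
    have hx' : x ∈ coneSlice R t := hslice hx
    have hωC : ∀ s ∈ Set.Icc t' t, ∀ y ∈ coneSlice R s, sol ω (s, y) = g (s, y) := by
      rw [hC] at hω; exact hω
    have hω'C : ∀ s ∈ Set.Icc t' t, ∀ y ∈ coneSlice R s, sol ω' (s, y) = g (s, y) := by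
      rw [hC] at hω'; exact hω'
    rw [hωC t ⟨le_of_lt ht't, le_refl t⟩ x hx', hω'C t ⟨le_of_lt ht't, le_refl t⟩ x hx']
  have hCne : C.Nonempty := by
    rcases Set.eq_empty_or_nonempty C with h | h
    · exfalso; rw [h, Set.inter_empty] at hWCpos; simp at hWCpos
    · exact h.mono (Set.Subset.refl _) |>.elim (fun x hx => ⟨x, hx⟩)
  obtain ⟨ω₀, hω₀⟩ := hCne
  have hWC : μ (W ∩ C) ≠ 0 := hWCpos.ne'
  have hCpos : μ C ≠ 0 := by
    intro h
    exact hWC (le_antisymm (le_trans (measure_mono (Set.inter_subset_right)) h.le) zero_le)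
  have hWCfin : μ (W ∩ C) ≠ ⊤ := (measure_lt_top μ _).ne
  have hCfin : μ C ≠ ⊤ := (measure_lt_top μ _).ne
  by_cases hQ0 : Q (sol ω₀)
  · have hCA : C ⊆ A := by
      intro ω hω
      rw [hA]
      exact (hQ (sol ω) (sol ω₀) (hagree ω hω ω₀ hω₀)).mpr hQ0
    rw [cond_apply (hWm.inter hCm), cond_apply hCm,
      Set.inter_eq_left.mpr (Set.inter_subset_right.trans hCA : W ∩ C ⊆ A),
      Set.inter_eq_left.mpr hCA,
      ENNReal.inv_mul_cancel hWC hWCfin, ENNReal.inv_mul_cancel hCpos hCfin]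
  · have hCA : C ∩ A = ∅ := by
      ext ω
      simp only [Set.mem_inter_iff, Set.mem_empty_iff_false, iff_false, not_and]
      intro hω hωA
      rw [hA] at hωA
      exact hQ0 ((hQ (sol ω) (sol ω₀) (hagree ω hω ω₀ hω₀)).mp hωA)
    have hWCA : W ∩ C ∩ A = ∅ := by
      rw [Set.inter_assoc, hCA, Set.inter_empty]
    rw [cond_apply (hWm.inter hCm), cond_apply hCm, hCA, hWCA]
    simp
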